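/- Assume in addition that h is nondecreasing. Let s ∈ ℝ and β ∈ (0,b] be such that (k^{(s)})'(β) = r. Then (k^{(s)})'(x) ≥ 0 for every x ∈ [0,β]. -/
import Mathlib


open Set Filter Topology

/-- k (with derivatives k', k'') is a C² solution on [0,b] of the Cauchy problem
k'' + (2/σ²)(m·F(k') + ½σ²ε·F(k')² − ϱ·k + h(x)) = 0, k(0) = s, k'(0) = 0. -/
def IsCauchySolution (b σ ϱ m : ℝ) (h F : ℝ → ℝ) (ε s : ℝ) (k k' k'' : ℝ → ℝ) : Prop :=
  (∀ x ∈ Icc (0:ℝ) b, HasDerivWithinAt k (k' x) (Icc (0:ℝ) b) x) ∧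
  (∀ x ∈ Icc (0:ℝ) b, HasDerivWithinAt k' (k'' x) (Icc (0:ℝ) b) x) ∧
  ContinuousOn k'' (Icc (0:ℝ) b) ∧
  (∀ x ∈ Icc (0:ℝ) b,
    k'' x + (2 / σ ^ 2) * (m * F (k' x) + (1 / 2) * σ ^ 2 * ε * (F (k' x)) ^ 2
      - ϱ * k x + h x) = 0) ∧
  k 0 = s ∧ k' 0 = 0

/-- Assume in addition that h is nondecreasing. Let s ∈ ℝ and
β ∈ (0,b] be such that (k^{(s)})'(β) = r. Then (k^{(s)})'(x) ≥ 0 for every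
x ∈ [0,β]. -/
theorem stmt13 (b σ ϱ r m ε : ℝ) (hb : 0 < b) (hσ : 0 < σ) (hϱ : 0 < ϱ) (hr : 0 < r)
    (hε : 0 ≤ ε) (h F : ℝ → ℝ)
    (hLip : ∃ K : NNReal, LipschitzOnWith K h (Icc (0:ℝ) b))
    (hmono : MonotoneOn h (Icc (0:ℝ) b))
    (hF1 : ContDiff ℝ 1 F) (hFid : ∀ z : ℝ, |z| ≤ r → F z = z)
    (hFbd : ∀ z : ℝ, |F z| ≤ 2 * r) (hF'bd : ∀ z : ℝ, |deriv F z| ≤ 1)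
    (s : ℝ) (k k' k'' : ℝ → ℝ)
    (hsol : IsCauchySolution b σ ϱ m h F ε s k k' k'')
    (β : ℝ) (hβ : β ∈ Ioc (0:ℝ) b) (hβr : k' β = r) :
    ∀ x ∈ Icc (0:ℝ) β, 0 ≤ k' x := by
  obtain ⟨hk, hk', hk''c, hode, hk0, hk'0⟩ := hsol
  obtain ⟨hβ0, hβb⟩ := hβ
  have hkc : ContinuousOn k (Icc (0:ℝ) b) := fun x hx => (hk x hx).continuousWithinAt
  have hk'c : ContinuousOn k' (Icc (0:ℝ) b) := fun x hx => (hk' x hx).continuousWithinAt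
  by_contra hcon
  push_neg at hcon
  obtain ⟨x₀, hx₀, hx₀neg⟩ := hcon
  have hx₀0 : (0:ℝ) ≤ x₀ := hx₀.1
  have hx₀β : x₀ ≤ β := hx₀.2
  have hx₀b : x₀ ≤ b := hx₀β.trans hβb
  -- the last zero of k' before x₀
  set S₁ : Set ℝ := Icc (0:ℝ) x₀ ∩ k' ⁻¹' {0} with hS₁def
  have hS₁closed : IsClosed S₁ :=
    (hk'c.mono (Icc_subset_Icc le_rfl hx₀b)).preimage_isClosed_of_isClosed
      isClosed_Icc isClosed_singleton
  have hS₁comp : IsCompact S₁ :=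
    isCompact_Icc.of_isClosed_subset hS₁closed inter_subset_left
  have hS₁ne : S₁.Nonempty := ⟨0, ⟨le_rfl, hx₀0⟩, by simp [hk'0]⟩
  set x₁ : ℝ := sSup S₁ with hx₁def
  have hx₁mem : x₁ ∈ S₁ := hS₁comp.sSup_mem hS₁ne
  have hx₁Icc : x₁ ∈ Icc (0:ℝ) x₀ := hx₁mem.1
  have hk'x₁ : k' x₁ = 0 := hx₁mem.2
  have hub : ∀ x ∈ S₁, x ≤ x₁ := fun x hx => le_csSup hS₁comp.bddAbove hx
  have hx₁x₀ : x₁ < x₀ :=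
    lt_of_le_of_ne hx₁Icc.2 (fun e => hx₀neg.ne (e ▸ hk'x₁))
  -- the first zero of k' after x₀
  set S₂ : Set ℝ := Icc x₀ β ∩ k' ⁻¹' {0} with hS₂def
  have hS₂closed : IsClosed S₂ :=
    (hk'c.mono (Icc_subset_Icc hx₀0 hβb)).preimage_isClosed_of_isClosed
      isClosed_Icc isClosed_singleton
  have hS₂comp : IsCompact S₂ :=
    isCompact_Icc.of_isClosed_subset hS₂closed inter_subset_left
  have hS₂ne : S₂.Nonempty := by
    obtain ⟨c, hc, hck⟩ :=
      intermediate_value_Icc hx₀β (hk'c.mono (Icc_subset_Icc hx₀0 hβb))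
        (show (0:ℝ) ∈ Icc (k' x₀) (k' β) from ⟨hx₀neg.le, by rw [hβr]; exact hr.le⟩)
    exact ⟨c, hc, by simp [hck]⟩
  set x₂ : ℝ := sInf S₂ with hx₂def
  have hx₂mem : x₂ ∈ S₂ := hS₂comp.sInf_mem hS₂ne
  have hx₂Icc : x₂ ∈ Icc x₀ β := hx₂mem.1
  have hk'x₂ : k' x₂ = 0 := hx₂mem.2
  have hlb : ∀ x ∈ S₂, x₂ ≤ x := fun x hx => csInf_le hS₂comp.bddBelow hx
  have hx₀x₂ : x₀ < x₂ :=
    lt_of_le_of_ne hx₂Icc.1 (fun e => hx₀neg.ne (e ▸ hk'x₂))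
  have hx₁x₂ : x₁ < x₂ := hx₁x₀.trans hx₀x₂
  have hx₁b : x₁ ∈ Icc (0:ℝ) b := ⟨hx₁Icc.1, hx₁Icc.2.trans hx₀b⟩
  have hx₂b : x₂ ∈ Icc (0:ℝ) b := ⟨hx₀0.trans hx₂Icc.1, hx₂Icc.2.trans hβb⟩
  -- k' is negative on the open interval (x₁, x₂)
  have hneg : ∀ x ∈ Ioo x₁ x₂, k' x < 0 := by
    rintro x ⟨hx1, hx2⟩
    have hx0 : (0:ℝ) ≤ x := hx₁Icc.1.trans hx1.le
    rcases le_or_gt x x₀ with hle | hlt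
    · rcases lt_trichotomy (k' x) 0 with hc | hc | hc
      · exact hc
      · exact absurd (hub x ⟨⟨hx0, hle⟩, by simp [hc]⟩) (not_le.mpr hx1)
      · exfalso
        obtain ⟨c, hc', hck⟩ :=
          intermediate_value_Icc' hle (hk'c.mono (Icc_subset_Icc hx0 hx₀b))
            (show (0:ℝ) ∈ Icc (k' x₀) (k' x) from ⟨hx₀neg.le, hc.le⟩)
        have : c ∈ S₁ := ⟨⟨hx0.trans hc'.1, hc'.2⟩, by simp [hck]⟩
        exact absurd (hub c this) (not_le.mpr (hx1.trans_le hc'.1))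
    · have hxβ : x ≤ β := hx2.le.trans hx₂Icc.2
      rcases lt_trichotomy (k' x) 0 with hc | hc | hc
      · exact hc
      · exact absurd (hlb x ⟨⟨hlt.le, hxβ⟩, by simp [hc]⟩) (not_le.mpr hx2)
      · exfalso
        obtain ⟨c, hc', hck⟩ :=
          intermediate_value_Icc hlt.le (hk'c.mono (Icc_subset_Icc hx₀0 (hxβ.trans hβb)))
            (show (0:ℝ) ∈ Icc (k' x₀) (k' x) from ⟨hx₀neg.le, hc.le⟩)
        have : c ∈ S₂ := ⟨⟨hc'.1, hc'.2.trans hxβ⟩, by simp [hck]⟩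
        exact absurd (hlb c this) (not_le.mpr (hc'.2.trans_lt hx2))
  -- hence k' ≤ 0 on [x₁, x₂]
  have hnonpos : ∀ x ∈ Icc x₁ x₂, k' x ≤ 0 := by
    rintro x ⟨hx1, hx2⟩
    rcases eq_or_lt_of_le hx1 with he | he
    · rw [← he, hk'x₁]
    rcases eq_or_lt_of_le hx2 with he' | he'
    · rw [he', hk'x₂]
    exact (hneg x ⟨he, he'⟩).le
  -- k strictly decreases from x₁ to x₂ (mean value theorem)
  have hkdec : k x₂ < k x₁ := by
    obtain ⟨c, hc, hceq⟩ := exists_hasDerivAt_eq_slope k k' hx₁x₂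
      (hkc.mono (Icc_subset_Icc hx₁b.1 hx₂b.2))
      (fun x hx => (hk x ⟨hx₁b.1.trans hx.1.le, hx.2.le.trans hx₂b.2⟩).hasDerivAt
        (Icc_mem_nhds (hx₁b.1.trans_lt hx.1) (hx.2.trans_le hx₂b.2)))
    have h1 : k' c < 0 := hneg c hc
    have h2 : (0:ℝ) < x₂ - x₁ := sub_pos.mpr hx₁x₂
    rw [hceq] at h1
    have := mul_neg_of_neg_of_pos h1 h2
    rw [div_mul_cancel₀ _ h2.ne'] at this
    linarith
  -- k''(x₁) ≤ 0 (slope from the right)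
  have hd1 : k'' x₁ ≤ 0 := by
    have hten := hasDerivWithinAt_iff_tendsto_slope.mp (hk' x₁ hx₁b)
    have hsub : Ioo x₁ x₂ ⊆ Icc (0:ℝ) b \ {x₁} := fun x hx =>
      ⟨⟨hx₁b.1.trans hx.1.le, hx.2.le.trans hx₂b.2⟩, ne_of_gt hx.1⟩
    have hNB : (𝓝[Ioo x₁ x₂] x₁).NeBot := by
      apply mem_closure_iff_nhdsWithin_neBot.mp
      rw [closure_Ioo hx₁x₂.ne]
      exact ⟨le_rfl, hx₁x₂.le⟩
    have hten' : Tendsto (slope k' x₁) (𝓝[Ioo x₁ x₂] x₁) (𝓝 (k'' x₁)) :=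
      hten.mono_left (nhdsWithin_mono _ hsub)
    refine le_of_tendsto hten' (eventually_nhdsWithin_of_forall fun x hx => ?_)
    rw [slope_def_field, hk'x₁, sub_zero]
    exact div_nonpos_of_nonpos_of_nonneg (hneg x hx).le (sub_nonneg.mpr hx.1.le)
  -- k''(x₂) ≥ 0 (slope from the left)
  have hd2 : 0 ≤ k'' x₂ := by
    have hten := hasDerivWithinAt_iff_tendsto_slope.mp (hk' x₂ hx₂b)
    have hsub : Ioo x₁ x₂ ⊆ Icc (0:ℝ) b \ {x₂} := fun x hx =>
      ⟨⟨hx₁b.1.trans hx.1.le, hx.2.le.trans hx₂b.2⟩, ne_of_lt hx.2⟩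
    have hNB : (𝓝[Ioo x₁ x₂] x₂).NeBot := by
      apply mem_closure_iff_nhdsWithin_neBot.mp
      rw [closure_Ioo hx₁x₂.ne]
      exact ⟨hx₁x₂.le, le_rfl⟩
    have hten' : Tendsto (slope k' x₂) (𝓝[Ioo x₁ x₂] x₂) (𝓝 (k'' x₂)) :=
      hten.mono_left (nhdsWithin_mono _ hsub)
    refine ge_of_tendsto hten' (eventually_nhdsWithin_of_forall fun x hx => ?_)
    rw [slope_def_field, hk'x₂, sub_zero]
    exact div_nonneg_of_nonpos (hneg x hx).le (sub_nonpos.mpr hx.2.le)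
  -- the ODE at x₁ and x₂, where F(k') = F(0) = 0
  have hF0 : F 0 = 0 := hFid 0 (by simpa using hr.le)
  have heq1 := hode x₁ hx₁b
  have heq2 := hode x₂ hx₂b
  rw [hk'x₁, hF0] at heq1
  rw [hk'x₂, hF0] at heq2
  have hC : (0:ℝ) < 2 / σ ^ 2 := by positivity
  have hh12 : h x₁ ≤ h x₂ := hmono hx₁b hx₂b hx₁x₂.le
  nlinarith [mul_pos (mul_pos hC hϱ) (sub_pos.mpr hkdec),
    mul_nonneg hC.le (sub_nonneg.mpr hh12)]
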